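/- For an asymptotically stable switched linear system with quadratic cost c(x) = xᵀQx, Q ≻ 0, and any l with η_l < 1 (η_l as defined from the (l+1)-step cost contraction), the scaled truncated costs V_α^l := (1/(1−η_l)) Ṽ_α^l on the nodes of the dual De Bruijn graph H_l^T(M) satisfy the path-complete inequalities V_α^l(x) ≥ xᵀQx + V_β^l(A_{i}x) for every edge (α,β,i), and max_α V_α^l(x) ≤ J(x)/(1−η_l) for all x. -/

import Mathlib

open scoped ENNReal
open Filter Matrix

/-- Trajectory of the switched linear system `x_{k+1} = A_{σ(k)} x_k`. -/
def trajL {n M : ℕ} (A : Fin M → Matrix (Fin n) (Fin n) ℝ)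
    (σ : ℕ → Fin M) (x : Fin n → ℝ) : ℕ → (Fin n → ℝ)
  | 0 => x
  | k + 1 => A (σ k) *ᵥ trajL A σ x k

/-- Quadratic form `xᵀ Q x`. -/
def quadForm {n : ℕ} (Q : Matrix (Fin n) (Fin n) ℝ) (x : Fin n → ℝ) : ℝ :=
  x ⬝ᵥ (Q *ᵥ x)

/-- Extension of a finite word `w ∈ ⟨M⟩^l` to a switching signal `ℕ → ⟨M⟩`
(using `d` beyond time `l`; the truncated cost does not depend on `d`). -/
def wordExt {M l : ℕ} (w : Fin l → Fin M) (d : Fin M) : ℕ → Fin M :=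
  fun k => if h : k < l then w ⟨k, h⟩ else d

/-- Truncated cost `Ṽ_γ(x) = ∑_{k=0}^{l} ξ(k,x,σ_γ)ᵀ Q ξ(k,x,σ_γ)` where `σ_γ`
follows the modes of the word `γ ∈ ⟨M⟩^l`. -/
def truncCost {n M l : ℕ} (A : Fin M → Matrix (Fin n) (Fin n) ℝ)
    (Q : Matrix (Fin n) (Fin n) ℝ) (d : Fin M) (γ : Fin l → Fin M)
    (x : Fin n → ℝ) : ℝ :=
  ∑ k ∈ Finset.range (l + 1), quadForm Q (trajL A (wordExt γ d) x k)

/-- Worst-case value function of the switched linear system with cost `xᵀQx`. -/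
noncomputable def valueFunLin {n M : ℕ} (A : Fin M → Matrix (Fin n) (Fin n) ℝ)
    (Q : Matrix (Fin n) (Fin n) ℝ) (x : Fin n → ℝ) : ℝ≥0∞ :=
  ⨆ σ : ℕ → Fin M, ∑' k : ℕ, ENNReal.ofReal (quadForm Q (trajL A σ x k))

lemma trajL_congr {n M : ℕ} (A : Fin M → Matrix (Fin n) (Fin n) ℝ)
    (σ τ : ℕ → Fin M) (x : Fin n → ℝ) (k : ℕ)
    (h : ∀ j, j < k → σ j = τ j) : trajL A σ x k = trajL A τ x k := by
  induction k with
  | zero => rfl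
  | succ k ih =>
    simp only [trajL, h k (Nat.lt_succ_self k),
      ih (fun j hj => h j (hj.trans (Nat.lt_succ_self k)))]

lemma trajL_shift {n M : ℕ} (A : Fin M → Matrix (Fin n) (Fin n) ℝ)
    (σ : ℕ → Fin M) (x : Fin n → ℝ) (k : ℕ) :
    trajL A (fun j => σ (j + 1)) (A (σ 0) *ᵥ x) k = trajL A σ x (k + 1) := by
  induction k with
  | zero => rfl
  | succ k ih => simp only [trajL, ih]

theorem stmt_11 {n M l : ℕ} (hM : 0 < M) (A : Fin M → Matrix (Fin n) (Fin n) ℝ)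
    (Q : Matrix (Fin n) (Fin n) ℝ) (hQ : Q.PosDef)
    (hstab : ∀ (σ : ℕ → Fin M) (x : Fin n → ℝ),
      Tendsto (trajL A σ x) atTop (nhds 0))
    (ηl : ℝ) (hη0 : 0 ≤ ηl) (hη1 : ηl < 1)
    (hη : ∀ (x : Fin n → ℝ) (σ : ℕ → Fin M),
      quadForm Q (trajL A σ x (l + 1)) ≤ ηl * quadForm Q x) :
    (∀ (w : Fin (l + 1) → Fin M) (x : Fin n → ℝ),
      quadForm Q x
        + (1 / (1 - ηl)) * truncCost A Q ⟨0, hM⟩ (fun k : Fin l => w k.succ)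
            (A (w 0) *ᵥ x)
        ≤ (1 / (1 - ηl)) * truncCost A Q ⟨0, hM⟩ (fun k : Fin l => w k.castSucc) x) ∧
    (∀ x : Fin n → ℝ,
      ENNReal.ofReal ((1 - ηl) *
          ⨆ γ : Fin l → Fin M, (1 / (1 - ηl)) * truncCost A Q ⟨0, hM⟩ γ x)
        ≤ valueFunLin A Q x) := by
  have hone : (0:ℝ) < 1 - ηl := by linarith
  have hcpos : (0:ℝ) < 1 / (1 - ηl) := by positivity
  have hQnn : ∀ y : Fin n → ℝ, 0 ≤ quadForm Q y := by
    intro y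
    have := hQ.posSemidef.dotProduct_mulVec_nonneg y
    simpa [quadForm] using this
  set d : Fin M := ⟨0, hM⟩
  constructor
  · intro w x
    set σ : ℕ → Fin M := wordExt w d with hσ
    have hinit : truncCost A Q d (fun k : Fin l => w k.castSucc) x
        = ∑ k ∈ Finset.range (l + 1), quadForm Q (trajL A σ x k) := by
      refine Finset.sum_congr rfl fun k hk => ?_
      congr 1
      refine trajL_congr A _ _ x k fun j hj => ?_
      have hjl : j < l := lt_of_lt_of_le hj (Nat.lt_succ_iff.mp (Finset.mem_range.mp hk))
      simp only [wordExt, hσ, dif_pos hjl, dif_pos (hjl.trans (Nat.lt_succ_self l))]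
      exact congrArg w (Fin.ext rfl)
    have htailσ : wordExt (fun k : Fin l => w k.succ) d
        = fun j => σ (j + 1) := by
      funext j
      by_cases hj : j < l
      · simp only [wordExt, hσ, dif_pos hj, dif_pos (Nat.succ_lt_succ hj)]
        exact congrArg w (Fin.ext rfl)
      · have : ¬ (j + 1 < l + 1) := by omega
        simp only [wordExt, hσ, dif_neg hj, dif_neg this]
    have hσ0 : σ 0 = w 0 := by
      simp only [hσ, wordExt, dif_pos (Nat.succ_pos l)]
      exact congrArg w (Fin.ext rfl)
    have htail : truncCost A Q d (fun k : Fin l => w k.succ) (A (w 0) *ᵥ x)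
        = ∑ k ∈ Finset.range (l + 1), quadForm Q (trajL A σ x (k + 1)) := by
      refine Finset.sum_congr rfl fun k _ => ?_
      congr 1
      rw [show trajL A (wordExt (fun k : Fin l => w k.succ) d) (A (w 0) *ᵥ x) k
          = trajL A (fun j => σ (j + 1)) (A (σ 0) *ᵥ x) k by rw [hσ0, htailσ],
        trajL_shift]
    have hsum : ∑ k ∈ Finset.range (l + 1), quadForm Q (trajL A σ x (k + 1))
        = (∑ k ∈ Finset.range (l + 1), quadForm Q (trajL A σ x k))
          + quadForm Q (trajL A σ x (l + 1)) - quadForm Q x := by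
      have h1 := Finset.sum_range_succ (fun k => quadForm Q (trajL A σ x k)) (l + 1)
      have h2 := Finset.sum_range_succ' (fun k => quadForm Q (trajL A σ x k)) (l + 1)
      simp only [trajL] at h1 h2 ⊢
      linarith
    rw [hinit, htail, hsum]
    have hT := hη x σ
    set T := quadForm Q (trajL A σ x (l + 1))
    set V := ∑ k ∈ Finset.range (l + 1), quadForm Q (trajL A σ x k)
    have hkey : (1 / (1 - ηl)) * (ηl * quadForm Q x)
        = (1 / (1 - ηl)) * quadForm Q x - quadForm Q x := by
      field_simp
      ring
    have := mul_le_mul_of_nonneg_left hT hcpos.le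
    nlinarith [this, hkey]
  · intro x
    haveI : Nonempty (Fin M) := ⟨⟨0, hM⟩⟩
    obtain ⟨γ₀, hγ₀⟩ := Finite.exists_max (fun γ : Fin l → Fin M => truncCost A Q d γ x)
    have hsup : (⨆ γ : Fin l → Fin M, (1 / (1 - ηl)) * truncCost A Q d γ x)
        ≤ (1 / (1 - ηl)) * truncCost A Q d γ₀ x :=
      ciSup_le fun γ => mul_le_mul_of_nonneg_left (hγ₀ γ) hcpos.le
    have h1 : (1 - ηl) * ⨆ γ : Fin l → Fin M, (1 / (1 - ηl)) * truncCost A Q d γ x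
        ≤ truncCost A Q d γ₀ x := by
      have := mul_le_mul_of_nonneg_left hsup hone.le
      have heq : (1 - ηl) * ((1 / (1 - ηl)) * truncCost A Q d γ₀ x)
          = truncCost A Q d γ₀ x := by
        field_simp
      linarith
    refine le_trans (ENNReal.ofReal_le_ofReal h1) ?_
    have h2 : ENNReal.ofReal (truncCost A Q d γ₀ x)
        = ∑ k ∈ Finset.range (l + 1),
            ENNReal.ofReal (quadForm Q (trajL A (wordExt γ₀ d) x k)) := by
      exact ENNReal.ofReal_sum_of_nonneg fun k _ => hQnn _
    rw [h2]
    refine le_trans (ENNReal.sum_le_tsum _) ?_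
    exact le_iSup (fun σ : ℕ → Fin M =>
      ∑' k : ℕ, ENNReal.ofReal (quadForm Q (trajL A σ x k))) (wordExt γ₀ d)
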